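/- Monotonicity of LPT load profiles: for any job set J on m machines and any extra job j*, the sorted (non-decreasing) vector of machine loads produced by the LPT algorithm on J is coordinate-wise at most the sorted vector of machine loads produced by LPT on J ∪ {j*}. -/

import Mathlib

/-- One step of LPT/list scheduling on the sorted load profile: add `p` to the first
(minimum) coordinate and re-sort non-decreasingly. -/
noncomputable def lptStep {m : ℕ} (hm : 0 < m) (v : Fin m → ℝ) (p : ℝ) : Fin m → ℝ :=
  let w := Function.update v ⟨0, hm⟩ (v ⟨0, hm⟩ + p)
  fun k => w (Tuple.sort w k)

/-- The sorted load profile produced by list scheduling the jobs of `l` in order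
(for `l` sorted non-increasingly this is the LPT load profile). -/
noncomputable def lptProfile {m : ℕ} (hm : 0 < m) (l : List ℝ) : Fin m → ℝ :=
  l.foldl (lptStep hm) (fun _ => 0)

/-- Order statistics are monotone under pointwise domination. -/
lemma sort_mono {m : ℕ} {u v : Fin m → ℝ} (h : ∀ i, u i ≤ v i) (k : Fin m) :
    u (Tuple.sort u k) ≤ v (Tuple.sort v k) := by
  by_contra hc
  push_neg at hc
  have hmu := Tuple.monotone_sort u
  have hmv := Tuple.monotone_sort v
  have hsub : (Finset.Iic k).image (Tuple.sort v) ⊆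
      (Finset.Iio k).image (Tuple.sort u) := by
    intro j hj
    simp only [Finset.mem_image, Finset.mem_Iic, Finset.mem_Iio] at hj ⊢
    obtain ⟨i, hik, rfl⟩ := hj
    refine ⟨(Tuple.sort u).symm (Tuple.sort v i), ?_, by simp⟩
    by_contra hge
    push_neg at hge
    have h1 : u (Tuple.sort u k) ≤ u (Tuple.sort v i) := by
      have := hmu hge
      simpa using this
    have h2 : v (Tuple.sort v i) ≤ v (Tuple.sort v k) := hmv hik
    exact absurd (h1.trans ((h _).trans h2)) (not_le.2 hc)
  have hcard := Finset.card_le_card hsub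
  rw [Finset.card_image_of_injective _ (Tuple.sort v).injective,
      Finset.card_image_of_injective _ (Tuple.sort u).injective] at hcard
  rw [Fin.card_Iic, Fin.card_Iio] at hcard
  omega

lemma update_le_update {m : ℕ} (hm : 0 < m) {v w : Fin m → ℝ} (p : ℝ)
    (h : ∀ i, v i ≤ w i) (i : Fin m) :
    Function.update v ⟨0, hm⟩ (v ⟨0, hm⟩ + p) i ≤
      Function.update w ⟨0, hm⟩ (w ⟨0, hm⟩ + p) i := by
  rcases eq_or_ne i ⟨0, hm⟩ with rfl | hi
  · simpa using add_le_add_right (h _) p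
  · simpa [Function.update_of_ne hi] using h i

lemma lptStep_mono {m : ℕ} (hm : 0 < m) {v w : Fin m → ℝ} (p : ℝ)
    (h : ∀ i, v i ≤ w i) (i : Fin m) : lptStep hm v p i ≤ lptStep hm w p i :=
  sort_mono (update_le_update hm p h) i

lemma lptStep_sorted {m : ℕ} (hm : 0 < m) (v : Fin m → ℝ) (p : ℝ) :
    Monotone (lptStep hm v p) :=
  Tuple.monotone_sort _

lemma le_lptStep {m : ℕ} (hm : 0 < m) {v : Fin m → ℝ} (hv : Monotone v) {p : ℝ}
    (hp : 0 ≤ p) (i : Fin m) : v i ≤ lptStep hm v p i := by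
  have hid : Tuple.sort v = Equiv.refl _ := Tuple.sort_eq_refl_iff_monotone.2 hv
  have h : ∀ j, v j ≤ Function.update v ⟨0, hm⟩ (v ⟨0, hm⟩ + p) j := by
    intro j
    rcases eq_or_ne j ⟨0, hm⟩ with rfl | hj
    · simpa using hp
    · simp [Function.update_of_ne hj]
  have := sort_mono h i
  rwa [hid] at this

lemma foldl_mono {m : ℕ} (hm : 0 < m) (b : List ℝ) :
    ∀ {v w : Fin m → ℝ}, (∀ i, v i ≤ w i) →
      ∀ i, b.foldl (lptStep hm) v i ≤ b.foldl (lptStep hm) w i := by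
  induction b with
  | nil => intro v w h i; exact h i
  | cons p b ih =>
    intro v w h i
    exact ih (fun j => lptStep_mono hm p h j) i

lemma foldl_sorted {m : ℕ} (hm : 0 < m) (a : List ℝ) :
    ∀ {v : Fin m → ℝ}, Monotone v → Monotone (a.foldl (lptStep hm) v) := by
  induction a with
  | nil => intro v hv; exact hv
  | cons p a ih => intro v hv; exact ih (lptStep_sorted hm v p)

theorem stmt18 {m : ℕ} (hm : 0 < m) (l l' : List ℝ) (pstar : ℝ)
    (hl : l.Pairwise (· ≥ ·)) (hl' : l'.Pairwise (· ≥ ·))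
    (hperm : l'.Perm (pstar :: l))
    (hpos : ∀ p ∈ l, 0 ≤ p) (hps : 0 ≤ pstar) :
    ∀ i, lptProfile hm l i ≤ lptProfile hm l' i := by
  have hmem : pstar ∈ l' := hperm.mem_iff.2 List.mem_cons_self
  obtain ⟨a, b, rfl⟩ := List.mem_iff_append.1 hmem
  have hsub : (a ++ b).Sublist (a ++ pstar :: b) :=
    (List.sublist_cons_self pstar b).append_left a
  have hab_sorted : (a ++ b).Pairwise (· ≥ ·) := hl'.sublist hsub
  have habperm : (a ++ b).Perm l := by
    have h1 : (a ++ pstar :: b).Perm (pstar :: (a ++ b)) := List.perm_middle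
    exact (h1.symm.trans hperm).cons_inv
  have hlab : l = a ++ b :=
    (List.Perm.eq_of_pairwise' hab_sorted hl habperm).symm
  subst hlab
  intro i
  unfold lptProfile
  rw [List.foldl_append, List.foldl_append, List.foldl_cons]
  set v : Fin m → ℝ := a.foldl (lptStep hm) (fun _ => 0) with hv
  have hvmono : Monotone v := foldl_sorted hm a monotone_const
  exact foldl_mono hm b (fun j => le_lptStep hm hvmono hps j) i
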